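/- Let S₁ ⊆ ℝⁿ be a nonempty closed convex set contained in the closed unit ball, and let S₀ = S₁ ∩ {x : ‖x‖ = 1} be nonempty. Suppose S₁ = {x̄ + v : ‖x̄ + v‖ ≤ 1, v ∈ V} where V is a linear subspace, x̄ ⟂ V, and ‖x̄‖ < 1. Let x ∈ ℝⁿ with Π_{S₁}(x) = x̄. Then Π_{S₀}(x) = S₀ and dist(x, S₀) = √(‖x − x̄‖² + 1 − ‖x̄‖²). -/

import Mathlib

open Matrix
open scoped RealInnerProductSpace

/-- Hard case 2 (ii) geometry: if `Π_{S₁}(x) = x̄`, then every point of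
`S₀ = S₁ ∩ sphere` is a nearest point of `S₀` to `x`, and
`dist(x, S₀) = √(‖x − x̄‖² + 1 − ‖x̄‖²)`. -/
theorem trs_projection_case1
    (n : ℕ) (V : Submodule ℝ (EuclideanSpace ℝ (Fin n)))
    (xb : EuclideanSpace ℝ (Fin n)) (hxb : xb ∈ Vᗮ) (hxbn : ‖xb‖ < 1)
    (S0 S1 : Set (EuclideanSpace ℝ (Fin n)))
    (hS1 : S1 = {y | (∃ v ∈ V, y = xb + v) ∧ ‖y‖ ≤ 1})
    (hS0 : S0 = {y | (∃ v ∈ V, y = xb + v) ∧ ‖y‖ = 1})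
    (hne : S0.Nonempty)
    (x : EuclideanSpace ℝ (Fin n))
    (hproj : ∀ y ∈ S1, ‖x - xb‖ ≤ ‖x - y‖) :
    (∀ y ∈ S0, ‖x - y‖ = Real.sqrt (‖x - xb‖ ^ 2 + 1 - ‖xb‖ ^ 2)) ∧
    Metric.infDist x S0 = Real.sqrt (‖x - xb‖ ^ 2 + 1 - ‖xb‖ ^ 2) := by
  have key : ∀ y ∈ S0, ‖x - y‖ = Real.sqrt (‖x - xb‖ ^ 2 + 1 - ‖xb‖ ^ 2) := by
    intro y hy
    rw [hS0] at hy
    obtain ⟨⟨v, hv, rfl⟩, hny⟩ := hy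
    have hov : (inner ℝ xb v : ℝ) = 0 := by
      have := hxb v hv
      rwa [real_inner_comm] at this
    have hnorm : ‖xb‖ ^ 2 + ‖v‖ ^ 2 = 1 := by
      have h := norm_add_sq_real xb v
      rw [hov] at h
      nlinarith [hny]
    set c := (inner ℝ (x - xb) v : ℝ) with hc
    have hall : ∀ t : ℝ, |t| ≤ 1 → 2 * (t * c) ≤ t ^ 2 * ‖v‖ ^ 2 := by
      intro t ht
      have habs := abs_le.mp ht
      have ht2 : t ^ 2 ≤ 1 := by nlinarith [habs.1, habs.2]
      have hmem : (xb + t • v) ∈ S1 := by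
        rw [hS1]
        refine ⟨⟨t • v, V.smul_mem t hv, rfl⟩, ?_⟩
        have hsq : ‖xb + t • v‖ ^ 2 ≤ 1 := by
          have h := norm_add_sq_real xb (t • v)
          rw [inner_smul_right, hov, norm_smul, Real.norm_eq_abs] at h
          have : (|t| * ‖v‖) ^ 2 = t ^ 2 * ‖v‖ ^ 2 := by
            rw [mul_pow, sq_abs]
          nlinarith [norm_nonneg v, sq_nonneg ‖v‖]
        nlinarith [norm_nonneg (xb + t • v)]
      have hle := hproj _ hmem
      have hle2 : ‖x - xb‖ ^ 2 ≤ ‖x - (xb + t • v)‖ ^ 2 := by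
        nlinarith [norm_nonneg (x - xb), norm_nonneg (x - (xb + t • v))]
      have heq : x - (xb + t • v) = (x - xb) - t • v := by abel
      rw [heq] at hle2
      have h := norm_sub_sq_real (x - xb) (t • v)
      rw [inner_smul_right, norm_smul, Real.norm_eq_abs] at h
      have habs2 : (|t| * ‖v‖) ^ 2 = t ^ 2 * ‖v‖ ^ 2 := by rw [mul_pow, sq_abs]
      rw [habs2] at h
      nlinarith
    have hc0 : c = 0 := by
      by_contra hc0
      have hvne : v ≠ 0 := by
        intro hv0
        apply hc0
        rw [hc, hv0, inner_zero_right]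
      have hN : 0 < ‖v‖ ^ 2 := pow_pos (norm_pos_iff.mpr hvne) 2
      set t0 := min 1 (|c| / ‖v‖ ^ 2) with ht0
      have ht0pos : 0 < t0 := lt_min one_pos (div_pos (abs_pos.mpr hc0) hN)
      have ht0le1 : t0 ≤ 1 := min_le_left _ _
      have ht0le : t0 ≤ |c| / ‖v‖ ^ 2 := min_le_right _ _
      have ht0leN : t0 * ‖v‖ ^ 2 ≤ |c| := by
        rw [div_eq_mul_inv] at ht0le
        calc t0 * ‖v‖ ^ 2 ≤ (|c| * (‖v‖ ^ 2)⁻¹) * ‖v‖ ^ 2 := by nlinarith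
          _ = |c| := by field_simp
      rcases le_or_gt 0 c with hcs | hcs
      · have h := hall t0 (by rw [abs_of_pos ht0pos]; exact ht0le1)
        have hcabs : |c| = c := abs_of_nonneg hcs
        have hcpos : 0 < c := lt_of_le_of_ne hcs (Ne.symm hc0)
        nlinarith [mul_le_mul_of_nonneg_left ht0leN ht0pos.le, mul_pos ht0pos hcpos]
      · have h := hall (-t0) (by rw [abs_neg, abs_of_pos ht0pos]; exact ht0le1)
        have hcabs : |c| = -c := abs_of_neg hcs
        nlinarith [mul_le_mul_of_nonneg_left ht0leN ht0pos.le, mul_pos ht0pos (neg_pos.mpr hcs)]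
    have heq : x - (xb + v) = (x - xb) - v := by abel
    rw [heq]
    have h := norm_sub_sq_real (x - xb) v
    rw [← hc, hc0] at h
    have hsq : ‖(x - xb) - v‖ ^ 2 = ‖x - xb‖ ^ 2 + 1 - ‖xb‖ ^ 2 := by
      rw [h]; linarith
    rw [← hsq]
    exact (Real.sqrt_sq (norm_nonneg _)).symm
  refine ⟨key, ?_⟩
  obtain ⟨y0, hy0⟩ := hne
  apply le_antisymm
  · calc Metric.infDist x S0 ≤ dist x y0 := Metric.infDist_le_dist_of_mem hy0
      _ = _ := by rw [dist_eq_norm, key y0 hy0]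
  · refine le_of_not_gt fun hlt => ?_
    obtain ⟨y, hy, hdy⟩ := (Metric.infDist_lt_iff ⟨y0, hy0⟩).mp hlt
    rw [dist_eq_norm, key y hy] at hdy
    exact lt_irrefl _ hdy
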